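/- Let s ≥ 1 and N ≥ 0 be integers and let x be a real number with -2^N ≤ x ≤ 0. Then exp(x) ≤ (Σ_{i=0}^{2s} (x/2^N)^i/i!)^{2^N} ≤ exp(x - 3·x^{2s-1}/(2^{N(2s-2)}·(2s+1)!)). -/

import Mathlib

open Real Finset

private lemma pair_abs (y : ℝ) (hy0 : -1 ≤ y) (hy1 : y ≤ 0) (m : ℕ) :
    |y ^ (m + 1) / (Nat.factorial (m + 1) : ℝ)| ≤ |y ^ m / (Nat.factorial m : ℝ)| := by
  rw [abs_div, abs_div, abs_pow, abs_pow,
    abs_of_nonneg (by positivity : (0:ℝ) ≤ (Nat.factorial (m+1) : ℝ)),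
    abs_of_nonneg (by positivity : (0:ℝ) ≤ (Nat.factorial m : ℝ))]
  have h1 : |y| ≤ 1 := abs_le.2 ⟨hy0, hy1.trans zero_le_one⟩
  have h2 : (0:ℝ) < Nat.factorial m := by positivity
  have h3 : (Nat.factorial m : ℝ) ≤ Nat.factorial (m+1) := by
    exact_mod_cast Nat.factorial_le (Nat.le_succ m)
  exact div_le_div₀ (by positivity)
    (pow_le_pow_of_le_one (abs_nonneg y) h1 (Nat.le_succ m)) h2 h3

private lemma pair_nonpos (y : ℝ) (hy0 : -1 ≤ y) (hy1 : y ≤ 0) (m : ℕ) (hm : Odd m) :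
    y ^ m / (Nat.factorial m : ℝ) + y ^ (m + 1) / (Nat.factorial (m + 1) : ℝ) ≤ 0 := by
  have h1 : y ^ m ≤ 0 := hm.pow_nonpos hy1
  have h2 : y ^ m / (Nat.factorial m : ℝ) ≤ 0 := by
    apply div_nonpos_of_nonpos_of_nonneg h1 (by positivity)
  have := pair_abs y hy0 hy1 m
  rw [abs_of_nonpos h2] at this
  have h3 : y ^ (m+1) / (Nat.factorial (m+1) : ℝ) ≤ -(y ^ m / (Nat.factorial m : ℝ)) :=
    (le_abs_self _).trans this
  linarith

private lemma pair_nonneg (y : ℝ) (hy0 : -1 ≤ y) (hy1 : y ≤ 0) (m : ℕ) (hm : Even m) :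
    0 ≤ y ^ m / (Nat.factorial m : ℝ) + y ^ (m + 1) / (Nat.factorial (m + 1) : ℝ) := by
  have h1 : (0:ℝ) ≤ y ^ m := hm.pow_nonneg y
  have h2 : 0 ≤ y ^ m / (Nat.factorial m : ℝ) := by positivity
  have := pair_abs y hy0 hy1 m
  rw [abs_of_nonneg h2] at this
  have h3 : -(y ^ (m+1) / (Nat.factorial (m+1) : ℝ)) ≤ y ^ m / (Nat.factorial m : ℝ) :=
    (neg_le_abs _).trans this
  linarith

private lemma summable_tail (y : ℝ) (m : ℕ) :
    Summable (fun i : ℕ => y ^ (i + m) / (Nat.factorial (i + m) : ℝ)) := by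
  have := Real.summable_pow_div_factorial y
  exact (summable_nat_add_iff m).2 this

private lemma tail_split (y : ℝ) (hy0 : -1 ≤ y) (hy1 : y ≤ 0) (m : ℕ) :
    ∑' i : ℕ, y ^ (i + m) / (Nat.factorial (i + m) : ℝ)
      = ∑' k : ℕ, (y ^ (2*k + m) / (Nat.factorial (2*k + m) : ℝ)
          + y ^ (2*k + m + 1) / (Nat.factorial (2*k + m + 1) : ℝ)) := by
  set g : ℕ → ℝ := fun i => y ^ (i + m) / (Nat.factorial (i + m) : ℝ) with hg
  have hsg : Summable g := summable_tail y m
  have he : Summable (fun k => g (2*k)) :=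
    hsg.comp_injective (fun a b h => by omega)
  have ho : Summable (fun k => g (2*k+1)) :=
    hsg.comp_injective (fun a b h => by omega)
  rw [← tsum_even_add_odd he ho, ← Summable.tsum_add he ho]
  apply tsum_congr
  intro k
  have e1 : 2*k + 1 + m = 2*k + m + 1 := by omega
  simp only [hg, e1]

private lemma tail_nonpos (y : ℝ) (hy0 : -1 ≤ y) (hy1 : y ≤ 0) (m : ℕ) (hm : Odd m) :
    ∑' i : ℕ, y ^ (i + m) / (Nat.factorial (i + m) : ℝ) ≤ 0 := by
  rw [tail_split y hy0 hy1 m]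
  apply tsum_nonpos
  intro k
  have : Odd (2*k + m) := by rcases hm with ⟨j, hj⟩; exact ⟨k + j, by omega⟩
  simpa using pair_nonpos y hy0 hy1 (2*k+m) this

private lemma tail_nonneg (y : ℝ) (hy0 : -1 ≤ y) (hy1 : y ≤ 0) (m : ℕ) (hm : Even m) :
    0 ≤ ∑' i : ℕ, y ^ (i + m) / (Nat.factorial (i + m) : ℝ) := by
  rw [tail_split y hy0 hy1 m]
  apply tsum_nonneg
  intro k
  have : Even (2*k + m) := by rcases hm with ⟨j, hj⟩; exact ⟨k + j, by omega⟩
  simpa using pair_nonneg y hy0 hy1 (2*k+m) this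

private lemma exp_eq_tsum' (y : ℝ) : Real.exp y = ∑' n : ℕ, y ^ n / (Nat.factorial n : ℝ) := by
  rw [Real.exp_eq_exp_ℝ, NormedSpace.exp_eq_tsum_div]

/-- Scaled version: for `y ∈ [-1,0]`, `exp y ≤ T` and `T ≤ exp y - y^(2s+1)/(2s+1)!`. -/
private lemma key (s : ℕ) (hs : 1 ≤ s) (y : ℝ) (hy0 : -1 ≤ y) (hy1 : y ≤ 0) :
    Real.exp y ≤ ∑ i ∈ Finset.range (2*s+1), y ^ i / (Nat.factorial i : ℝ) ∧
    ∑ i ∈ Finset.range (2*s+1), y ^ i / (Nat.factorial i : ℝ)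
      ≤ Real.exp (y - 3 * y ^ (2*s-1) / (Nat.factorial (2*s+1) : ℝ)) := by
  set T := ∑ i ∈ Finset.range (2*s+1), y ^ i / (Nat.factorial i : ℝ) with hT
  have hsum := Real.summable_pow_div_factorial y
  have hsplit := Summable.sum_add_tsum_nat_add (f := fun n => y ^ n / (Nat.factorial n : ℝ)) (2*s+1) hsum
  have hexp : Real.exp y = T + ∑' i : ℕ, y ^ (i + (2*s+1)) / (Nat.factorial (i + (2*s+1)) : ℝ) := by
    rw [exp_eq_tsum' y, ← hsplit]
  have hodd : Odd (2*s+1) := ⟨s, by omega⟩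
  have h1 : Real.exp y ≤ T := by
    have := tail_nonpos y hy0 hy1 (2*s+1) hodd
    linarith
  refine ⟨h1, ?_⟩
  -- tail ≥ first term
  have hsplit2 := Summable.sum_add_tsum_nat_add
    (f := fun i => y ^ (i + (2*s+1)) / (Nat.factorial (i + (2*s+1)) : ℝ)) 1 (summable_tail y (2*s+1))
  have htail2 : 0 ≤ ∑' i : ℕ, y ^ (i + 1 + (2*s+1)) / (Nat.factorial (i + 1 + (2*s+1)) : ℝ) := by
    have h := tail_nonneg y hy0 hy1 (2*s+2) ⟨s+1, by omega⟩
    have : ∀ i : ℕ, i + 1 + (2*s+1) = i + (2*s+2) := fun i => by omega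
    simp only [this]
    exact h
  have htail_lb : y ^ (2*s+1) / (Nat.factorial (2*s+1) : ℝ)
      ≤ ∑' i : ℕ, y ^ (i + (2*s+1)) / (Nat.factorial (i + (2*s+1)) : ℝ) := by
    rw [← hsplit2]
    simp only [Finset.sum_range_one]
    simpa using htail2
  have h2 : T ≤ Real.exp y - y ^ (2*s+1) / (Nat.factorial (2*s+1) : ℝ) := by linarith
  -- now compare with exp(y - c)
  set c := 3 * y ^ (2*s-1) / (Nat.factorial (2*s+1) : ℝ) with hc
  have hy2s1 : y ^ (2*s-1) ≤ 0 := Odd.pow_nonpos ⟨s-1, by omega⟩ hy1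
  have hfac : (0:ℝ) < Nat.factorial (2*s+1) := by positivity
  have hcnp : c ≤ 0 := div_nonpos_of_nonpos_of_nonneg (by linarith) hfac.le
  have hexpc : Real.exp y * (1 - c) ≤ Real.exp (y - c) := by
    have hre : Real.exp (y - c) = Real.exp y * Real.exp (-c) := by
      rw [← Real.exp_add]; ring_nf
    rw [hre]
    have h4 : 1 - c ≤ Real.exp (-c) := by
      have := Real.add_one_le_exp (-c); linarith
    exact mul_le_mul_of_nonneg_left h4 (Real.exp_pos y).le
  -- need: -y^(2s+1)/(2s+1)! ≤ exp y * (-c)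
  have hsq : y ^ 2 ≤ 3 * Real.exp y := by
    have h5 : y ^ 2 ≤ 1 := by nlinarith
    have h6 : Real.exp (-1) ≤ Real.exp y := Real.exp_le_exp.2 hy0
    have h7 : (1:ℝ)/3 < Real.exp (-1) := by
      rw [Real.exp_neg, one_div]
      have he3 : Real.exp 1 < 3 := lt_trans Real.exp_one_lt_d9 (by norm_num)
      exact inv_strictAnti₀ (Real.exp_pos 1) he3
    nlinarith [Real.exp_pos y]
  have hpow : y ^ (2*s+1) = y ^ (2*s-1) * y ^ 2 := by
    rw [← pow_add]; congr 1; omega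
  have hkey : -(y ^ (2*s+1) / (Nat.factorial (2*s+1) : ℝ)) ≤ Real.exp y * (-c) := by
    rw [hc, hpow]
    have : Real.exp y * (-(3 * y ^ (2*s-1) / (Nat.factorial (2*s+1) : ℝ)))
        = (-(y ^ (2*s-1))) * (3 * Real.exp y) / (Nat.factorial (2*s+1) : ℝ) := by ring
    rw [this, ← neg_div, div_le_div_iff₀ hfac hfac]
    have hnn : 0 ≤ -(y ^ (2*s-1)) := by linarith
    nlinarith [mul_le_mul_of_nonneg_left hsq hnn, hfac]
  calc T ≤ Real.exp y - y ^ (2*s+1) / (Nat.factorial (2*s+1) : ℝ) := h2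
    _ = Real.exp y + (-(y ^ (2*s+1) / (Nat.factorial (2*s+1) : ℝ))) := by ring
    _ ≤ Real.exp y + Real.exp y * (-c) := by linarith
    _ = Real.exp y * (1 - c) := by ring
    _ ≤ Real.exp (y - c) := hexpc

/-- Case 2 of Proposition 3.4 (nonpositive argument): for integers `s ≥ 1`, `N ≥ 0`
and `-2^N ≤ x ≤ 0`,
`exp(x) ≤ (∑_{i=0}^{2s} (x/2^N)^i/i!)^{2^N} ≤ exp(x - 3x^{2s-1}/(2^{N(2s-2)}(2s+1)!))`. -/
theorem taylor_pow_approx_exp_nonpos (s N : ℕ) (hs : 1 ≤ s) (x : ℝ)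
    (hx0 : -(2 ^ N) ≤ x) (hx1 : x ≤ 0) :
    Real.exp x
        ≤ (∑ i ∈ Finset.range (2 * s + 1), (x / 2 ^ N) ^ i / (Nat.factorial i : ℝ)) ^ (2 ^ N) ∧
      (∑ i ∈ Finset.range (2 * s + 1), (x / 2 ^ N) ^ i / (Nat.factorial i : ℝ)) ^ (2 ^ N)
        ≤ Real.exp (x - 3 * x ^ (2 * s - 1) /
            ((2 : ℝ) ^ (N * (2 * s - 2)) * (Nat.factorial (2 * s + 1) : ℝ))) := by
  have h2N : (0:ℝ) < 2 ^ N := by positivity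
  set y := x / 2 ^ N with hy
  have hxy : x = 2 ^ N * y := by rw [hy]; field_simp
  have hy0 : -1 ≤ y := by rw [hy]; rw [le_div_iff₀ h2N]; linarith
  have hy1 : y ≤ 0 := div_nonpos_of_nonpos_of_nonneg hx1 h2N.le
  obtain ⟨h1, h2⟩ := key s hs y hy0 hy1
  set T := ∑ i ∈ Finset.range (2*s+1), y ^ i / (Nat.factorial i : ℝ) with hT
  have hexpx : Real.exp x = (Real.exp y) ^ (2 ^ N) := by
    rw [hxy]
    rw [show ((2:ℝ)^N * y) = ((2^N : ℕ) : ℝ) * y by push_cast; ring]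
    exact Real.exp_nat_mul y (2^N)
  constructor
  · rw [hexpx]
    exact pow_le_pow_left₀ (Real.exp_pos y).le h1 _
  · set c := 3 * y ^ (2*s-1) / (Nat.factorial (2*s+1) : ℝ) with hc
    have harg : x - 3 * x ^ (2 * s - 1) /
        ((2 : ℝ) ^ (N * (2 * s - 2)) * (Nat.factorial (2 * s + 1) : ℝ))
        = 2 ^ N * (y - c) := by
      have hxpow : x ^ (2*s-1) = ((2:ℝ)^N) ^ (2*s-1) * y ^ (2*s-1) := by
        rw [hxy, mul_pow]
      have hexpgen : ((2:ℝ)^N) ^ (2*s-1) = (2:ℝ) ^ (N*(2*s-2)) * 2 ^ N := by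
        rw [← pow_mul, ← pow_add]
        congr 1
        have : 2*s-1 = (2*s-2)+1 := by omega
        rw [this]; ring_nf
      rw [hc, hxpow, hexpgen, hxy]
      have hne : ((2:ℝ)^(N*(2*s-2))) ≠ 0 := by positivity
      have hfne : (Nat.factorial (2*s+1) : ℝ) ≠ 0 := by positivity
      field_simp
    rw [harg]
    have hTle : T ^ (2^N) ≤ (Real.exp (y - c)) ^ (2^N) := by
      apply pow_le_pow_left₀ _ h2
      exact (Real.exp_pos y).le.trans h1
    calc T ^ (2^N) ≤ (Real.exp (y - c)) ^ (2^N) := hTle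
      _ = Real.exp (2^N * (y - c)) := by
          rw [show ((2:ℝ)^N * (y-c)) = ((2^N : ℕ) : ℝ) * (y-c) by push_cast; ring]
          exact (Real.exp_nat_mul _ _).symm
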